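/- On the split octonions, every Lie algebra element X = Σ_{i<j} w̃_{ij} Ẽ^i Ẽ^j (with Ẽ^i = L_{ẽ^i}) satisfies X^T τ + τ X = 0, where τ = diag(-1,1,1,1,1,-1,-1,-1); hence the split-signature quadratic form |y|² = -y^T τ y on 𝕆̃ ≅ ℝ⁸ is infinitesimally preserved. -/
import Mathlib


open Matrix BigOperators

noncomputable section

def sIdx : Fin 8 → Fin 8 → Fin 8 :=
  ![![0, 1, 2, 3, 4, 5, 6, 7],
    ![1, 0, 7, 6, 5, 4, 3, 2],
    ![2, 7, 0, 5, 6, 3, 4, 1],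
    ![3, 6, 5, 0, 7, 2, 1, 4],
    ![4, 5, 6, 7, 0, 1, 2, 3],
    ![5, 4, 3, 2, 1, 0, 7, 6],
    ![6, 3, 4, 1, 2, 7, 0, 5],
    ![7, 2, 1, 4, 3, 6, 5, 0]]

def sSgn : Fin 8 → Fin 8 → ℝ :=
  ![![1, 1, 1, 1, 1, 1, 1, 1],
    ![1, 1, 1, -1, 1, 1, -1, 1],
    ![1, -1, 1, 1, 1, 1, 1, -1],
    ![1, 1, -1, 1, 1, -1, 1, 1],
    ![1, -1, -1, -1, 1, -1, -1, -1],
    ![1, -1, -1, 1, 1, -1, 1, -1],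
    ![1, 1, -1, -1, 1, -1, -1, 1],
    ![1, -1, 1, -1, 1, 1, -1, -1]]

/-- Left multiplication by the split octonion `y` as an 8×8 real matrix. -/
def Lt (y : Fin 8 → ℝ) : Matrix (Fin 8) (Fin 8) ℝ :=
  Matrix.of fun r c => ∑ i, if r = sIdx i c then sSgn i c * y i else 0

/-- The imaginary split octonion unit `ẽ^(i+1)` as a vector. -/
def et (i : Fin 7) : Fin 8 → ℝ := Pi.single i.succ 1

/-- The Clifford generator `Ẽ^(i+1) = L_{ẽ^(i+1)}`. -/
def Et (i : Fin 7) : Matrix (Fin 8) (Fin 8) ℝ := Lt (et i)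

/-- The general element `X = Σ_{i<j} w̃_{ij} Ẽ^i Ẽ^j` of the Lie algebra so(4,3) acting on 𝕆̃. -/
def Xtw (w : Fin 7 → Fin 7 → ℝ) : Matrix (Fin 8) (Fin 8) ℝ :=
  ∑ i, ∑ j, if i < j then w i j • (Et i * Et j) else 0

/-- The matrix τ = diag(-1,1,1,1,1,-1,-1,-1) of the split quadratic form. -/
def tauD : Matrix (Fin 8) (Fin 8) ℝ := Matrix.diagonal ![(-1 : ℝ), 1, 1, 1, 1, -1, -1, -1]


def sSgnZ : Fin 8 → Fin 8 → ℤ :=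
  ![![1, 1, 1, 1, 1, 1, 1, 1],
    ![1, 1, 1, -1, 1, 1, -1, 1],
    ![1, -1, 1, 1, 1, 1, 1, -1],
    ![1, 1, -1, 1, 1, -1, 1, 1],
    ![1, -1, -1, -1, 1, -1, -1, -1],
    ![1, -1, -1, 1, 1, -1, 1, -1],
    ![1, 1, -1, -1, 1, -1, -1, 1],
    ![1, -1, 1, -1, 1, 1, -1, -1]]

def EZ (i : Fin 7) : Matrix (Fin 8) (Fin 8) ℤ :=
  Matrix.of fun r c => if r = sIdx i.succ c then sSgnZ i.succ c else 0

def tauZ : Matrix (Fin 8) (Fin 8) ℤ := Matrix.diagonal ![(-1 : ℤ), 1, 1, 1, 1, -1, -1, -1]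

lemma sSgn_cast (i c : Fin 8) : sSgn i c = ((sSgnZ i c : ℤ) : ℝ) := by
  fin_cases i <;> fin_cases c <;> norm_num [sSgn, sSgnZ]

lemma Et_apply (i : Fin 7) (r c : Fin 8) :
    Et i r c = if r = sIdx i.succ c then sSgn i.succ c else 0 := by
  classical
  simp only [Et, Lt, et, Matrix.of_apply]
  rw [Finset.sum_eq_single i.succ]
  · simp [Pi.single_apply]
  · intro k _ hk; simp [Pi.single_apply, hk]
  · simp

lemma Et_eq (i : Fin 7) : Et i = (EZ i).map (Int.castRingHom ℝ) := by
  ext r c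
  simp [Et_apply, EZ, sSgn_cast, apply_ite ((↑) : ℤ → ℝ)]

lemma tauD_eq : tauD = tauZ.map (Int.castRingHom ℝ) := by
  ext r c
  simp [tauD, tauZ, Matrix.diagonal, apply_ite ((↑) : ℤ → ℝ)]
  fin_cases r <;> fin_cases c <;> norm_num

set_option maxHeartbeats 2000000 in
lemma keyZ : ∀ i j : Fin 7, i ≠ j →
    (EZ i * EZ j)ᵀ * tauZ + tauZ * (EZ i * EZ j) = 0 := by decide

lemma keyR (i j : Fin 7) (h : i ≠ j) :
    (Et i * Et j)ᵀ * tauD + tauD * (Et i * Et j) = 0 := by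
  rw [Et_eq i, Et_eq j, tauD_eq]
  simp only [← Matrix.map_mul, ← Matrix.transpose_map]
  rw [← Matrix.map_add _ (fun a b => map_add (Int.castRingHom ℝ) a b), keyZ i j h]
  simp

/-- every `X = Σ_{i<j} w̃_{ij} Ẽ^i Ẽ^j` satisfies `Xᵀ τ + τ X = 0`,
hence the split quadratic form `|y|² = -yᵀ τ y` is infinitesimally preserved. -/
theorem so43_preserves_split_form (w : Fin 7 → Fin 7 → ℝ) :
    (Xtw w)ᵀ * tauD + tauD * (Xtw w) = 0 ∧
    ∀ y : Fin 8 → ℝ,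
      -((Xtw w).mulVec y ⬝ᵥ tauD.mulVec y) - (y ⬝ᵥ tauD.mulVec ((Xtw w).mulVec y)) = 0 := by
  have h1 : (Xtw w)ᵀ * tauD + tauD * (Xtw w) = 0 := by
    simp only [Xtw, Matrix.transpose_sum, Finset.sum_mul, Finset.mul_sum,
      ← Finset.sum_add_distrib]
    apply Finset.sum_eq_zero; intro i _
    apply Finset.sum_eq_zero; intro j _
    by_cases h : i < j
    · simp only [if_pos h, Matrix.transpose_smul, Matrix.smul_mul, Matrix.mul_smul,
        ← smul_add, keyR i j h.ne, smul_zero]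
    · simp [if_neg h]
  refine ⟨h1, fun y => ?_⟩
  have h2 : (Xtw w).mulVec y ⬝ᵥ tauD.mulVec y
      = y ⬝ᵥ ((Xtw w)ᵀ * tauD).mulVec y := by
    rw [Matrix.dotProduct_mulVec, Matrix.vecMul_mulVec, ← Matrix.dotProduct_mulVec]
  have h3 : y ⬝ᵥ tauD.mulVec ((Xtw w).mulVec y)
      = y ⬝ᵥ (tauD * Xtw w).mulVec y := by
    rw [Matrix.mulVec_mulVec]
  have h4 : y ⬝ᵥ ((Xtw w)ᵀ * tauD).mulVec y + y ⬝ᵥ (tauD * Xtw w).mulVec y = 0 := by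
    rw [← dotProduct_add, ← Matrix.add_mulVec, h1]
    simp
  rw [h2, h3]
  linarith
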